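/- Let γ > 0, let F be the simple glide matrix with rows (1, γ, 0), (0, 1, 0), (0, 0, 1), let U = √(FᵀF) and R = F·U⁻¹. Then for all G, Λ ∈ ℝ the Cauchy stress of Becker's law is (1/det F) · R · ( 2G·log(U) + Λ·tr(log U)·1 ) · Fᵀ = 2G · ln( (γ + √(γ²+4))/2 ) · S, where S is the matrix with rows (γ, 1, 0), (1, 0, 0), (0, 0, 0). In particular the Cauchy stress is independent of Λ and the simple shear stress component is σ₁₂ = 2G·ln( (γ + √(γ²+4))/2 ). -/

import Mathlib

set_option maxHeartbeats 1600000


open Matrix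

/-- The principal matrix logarithm of a symmetric (positive definite) matrix, obtained by
applying the real logarithm to the eigenvalues in a spectral decomposition (junk value `0`
on non-Hermitian input). -/
noncomputable def matLog (A : Matrix (Fin 3) (Fin 3) ℝ) : Matrix (Fin 3) (Fin 3) ℝ :=
  if hA : A.IsHermitian then hA.cfc Real.log else 0

/-- The simple glide deformation gradient with amount of shear `γ`. -/
def glide (γ : ℝ) : Matrix (Fin 3) (Fin 3) ℝ := !![1, γ, 0; 0, 1, 0; 0, 0, 1]

/-- For the simple glide `F = glide γ` (`γ > 0`) with right stretch
tensor `U = √(FᵀF)` and orthogonal polar factor `R = F·U⁻¹`, the Cauchy stress of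
Becker's law satisfies, for all `G, Λ`:
`(1/det F)·R·(2G·log U + Λ·tr(log U)·1)·Fᵀ = 2G·ln((γ + √(γ²+4))/2)·S`, where `S` has
rows `(γ,1,0), (1,0,0), (0,0,0)`. In particular the Cauchy stress is independent of `Λ`
and the shear stress component is `σ₁₂ = 2G·ln((γ + √(γ²+4))/2)`. -/
theorem becker_cauchy_stress_simple_glide (γ : ℝ) (hγ : 0 < γ) (G Lam : ℝ)
    (U : Matrix (Fin 3) (Fin 3) ℝ) (hU : U.PosDef)
    (hUsq : U * U = (glide γ)ᵀ * glide γ) :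
    ((glide γ).det)⁻¹ •
        ((glide γ * U⁻¹) * ((2 * G) • matLog U + (Lam * (matLog U).trace) • 1) *
          (glide γ)ᵀ)
      = (2 * G * Real.log ((γ + Real.sqrt (γ ^ 2 + 4)) / 2)) •
          !![γ, 1, 0; 1, 0, 0; 0, 0, 0] := by
  have hγ0 : γ ≠ 0 := ne_of_gt hγ
  set s : ℝ := Real.sqrt (γ ^ 2 + 4) with hs_def
  have hs0 : 0 < s := Real.sqrt_pos.mpr (by positivity)
  have hs0' : s ≠ 0 := ne_of_gt hs0
  have hs2 : s ^ 2 = γ ^ 2 + 4 := Real.sq_sqrt (by positivity)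
  set η : ℝ := Real.log ((γ + s) / 2) with hη
  -- the explicit square root
  set U₀ : Matrix (Fin 3) (Fin 3) ℝ :=
    !![2/s, γ/s, 0; γ/s, (2+γ^2)/s, 0; 0, 0, 1] with hU₀
  have hherm : U₀.IsHermitian := by
    show U₀ᴴ = U₀
    ext i j
    fin_cases i <;> fin_cases j <;> simp [hU₀]
  have hpsd : U₀.PosSemidef := by
    refine Matrix.PosSemidef.of_dotProduct_mulVec_nonneg hherm (fun x => ?_)
    refine le_trans (show (0:ℝ) ≤ ((x 0)^2 + (x 0 + γ * x 1)^2 + 2*(x 1)^2)/s + (x 2)^2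
      by positivity) (le_of_eq ?_)
    simp [hU₀, dotProduct, Matrix.mulVec, Fin.sum_univ_three, Matrix.vecHead, Matrix.vecTail]
    field_simp
    ring
  have hgt : (glide γ)ᵀ = !![1, 0, 0; γ, 1, 0; 0, 0, 1] := by
    ext i j
    fin_cases i <;> fin_cases j <;> simp [glide, Matrix.vecHead, Matrix.vecTail]
  have hA : (glide γ)ᵀ * glide γ = !![1, γ, 0; γ, 1+γ^2, 0; 0, 0, 1] := by
    rw [hgt, glide, Matrix.mul_fin_three]
    ext i j
    fin_cases i <;> fin_cases j <;> simp [Matrix.vecHead, Matrix.vecTail] <;> (try ring1)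
  have hsq : U ^ 2 = U₀ ^ 2 := by
    rw [pow_two, pow_two, hUsq, hA, hU₀, Matrix.mul_fin_three]
    ext i j
    fin_cases i <;> fin_cases j <;> simp [Matrix.vecHead, Matrix.vecTail] <;> (try ring1) <;> (try field_simp) <;>
      first
        | ring1
        | (right; ring1)
        | linear_combination hs2
        | linear_combination -hs2
        | linear_combination γ*hs2
        | linear_combination -γ*hs2
        | linear_combination (γ-1)*hs2
        | linear_combination (γ+1)*hs2
        | linear_combination (γ^2+1)*hs2
        | linear_combination γ^2*hs2
        | linear_combination -γ^2*hs2
        | linear_combination s^2*hs2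
        | linear_combination -(s^2)*hs2
        | linear_combination (γ^2+4)*hs2
        | linear_combination η*hs2
        | linear_combination -η*hs2
        | linear_combination (η*γ)*hs2
        | linear_combination -(η*γ)*hs2
        | linear_combination (η*s)*hs2
        | linear_combination -(η*s)*hs2
        | linear_combination (η*s^2)*hs2
        | linear_combination -(η*s^2)*hs2
  have hUU₀ : U = U₀ := by
    open scoped MatrixOrder in
    exact (CFC.sq_eq_sq_iff U U₀ hU.posSemidef.nonneg hpsd.nonneg).mp hsq
  -- the spectrum of U
  have hspec : ∀ x ∈ spectrum ℝ U, (x-1)*(x^2 - s*x + 1) = 0 := by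
    intro x hx
    rw [spectrum.mem_iff] at hx
    have hdet : (algebraMap ℝ (Matrix (Fin 3) (Fin 3) ℝ) x - U).det = 0 := by
      by_contra h
      exact hx ((Matrix.isUnit_iff_isUnit_det _).mpr (isUnit_iff_ne_zero.mpr h))
    rw [hUU₀, hU₀] at hdet
    simp [Matrix.det_fin_three, Matrix.algebraMap_matrix_apply] at hdet
    field_simp at hdet
    have h2 : s^2 * ((x-1)*(x^2 - s*x + 1)) = 0 := by
      linear_combination hdet + (x-1)*(1-s*x)*hs2
    rcases mul_eq_zero.mp h2 with h | h
    · nlinarith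
    · exact h
  -- the logarithm of U matches a quadratic polynomial on the spectrum
  have hEq : (spectrum ℝ U).EqOn Real.log
      (fun x => (η/γ) * (-(x^2) + (s+2)*x + (-(s+1)))) := by
    intro x hx
    have key := hspec x hx
    rcases mul_eq_zero.mp key with h | h
    · have hx1 : x = 1 := by linarith
      subst hx1
      show Real.log 1 = _
      rw [Real.log_one]
      ring
    · have h3 : (2*x - s - γ)*(2*x - s + γ) = 0 := by linear_combination 4*h + hs2
      rcases mul_eq_zero.mp h3 with h4 | h4
      · have hx2 : x = (γ + s)/2 := by linarith
        show Real.log x = (η/γ) * (-(x^2) + (s+2)*x + (-(s+1)))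
        have hE : -(x^2) + (s+2)*x + (-(s+1)) = γ := by
          rw [hx2]; linear_combination hs2/4
        rw [hE, hx2, ← hη, div_mul_cancel₀ _ hγ0]
      · have hx2 : x = (s - γ)/2 := by linarith
        show Real.log x = (η/γ) * (-(x^2) + (s+2)*x + (-(s+1)))
        have hinv : x * ((γ+s)/2) = 1 := by rw [hx2]; linear_combination hs2/4
        have hxe : x = ((γ+s)/2)⁻¹ := eq_inv_of_mul_eq_one_left hinv
        have hE : -(x^2) + (s+2)*x + (-(s+1)) = -γ := by
          rw [hx2]; linear_combination hs2/4
        rw [hE, hxe, Real.log_inv, ← hη]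
        field_simp
  have hlogpoly : matLog U = (η / γ) •
      ((-(U*U)) + (s+2) • U + (-(s+1)) • (1 : Matrix (Fin 3) (Fin 3) ℝ)) := by
    have h1 : matLog U = cfc Real.log U := by
      rw [matLog, dif_pos hU.1, (hU.1.cfc_eq Real.log)]
    set q : Polynomial ℝ := Polynomial.C (η/γ) * (Polynomial.C (-1 : ℝ) * Polynomial.X^2 +
      Polynomial.C (s+2) * Polynomial.X + Polynomial.C (-(s+1))) with hq
    have hg : (fun x : ℝ => (η/γ) * (-(x^2) + (s+2)*x + (-(s+1)))) = q.eval := by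
      funext x
      simp only [hq, Polynomial.eval_mul, Polynomial.eval_add, Polynomial.eval_pow,
        Polynomial.eval_C, Polynomial.eval_X]
      ring
    have h2 : cfc q.eval U = (Polynomial.aeval U) q := cfc_polynomial q U hU.1
    rw [h1, cfc_congr hEq, hg, h2]
    simp only [hq, _root_.map_mul, _root_.map_add, Polynomial.aeval_C, Polynomial.aeval_X,
      map_pow, Algebra.algebraMap_eq_smul_one]
    simp only [smul_one_mul, neg_one_smul, pow_two, add_mul, add_smul, neg_one_mul]
  -- explicit form of the logarithm
  set M : Matrix (Fin 3) (Fin 3) ℝ := !![-γ/s, 2/s, 0; 2/s, γ/s, 0; 0, 0, 0] with hM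
  have hlog : matLog U = η • M := by
    rw [hlogpoly, hUsq, hA, hUU₀, hU₀, hM, Matrix.one_fin_three]
    ext i j
    fin_cases i <;> fin_cases j <;> simp [Matrix.vecHead, Matrix.vecTail] <;> (try ring1) <;> (try field_simp) <;>
      first
        | ring1
        | (right; ring1)
        | linear_combination hs2
        | linear_combination -hs2
        | linear_combination γ*hs2
        | linear_combination -γ*hs2
        | linear_combination (γ-1)*hs2
        | linear_combination (γ+1)*hs2
        | linear_combination (γ^2+1)*hs2
        | linear_combination γ^2*hs2
        | linear_combination -γ^2*hs2
        | linear_combination s^2*hs2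
        | linear_combination -(s^2)*hs2
        | linear_combination (γ^2+4)*hs2
        | linear_combination η*hs2
        | linear_combination -η*hs2
        | linear_combination (η*γ)*hs2
        | linear_combination -(η*γ)*hs2
        | linear_combination (η*s)*hs2
        | linear_combination -(η*s)*hs2
        | linear_combination (η*s^2)*hs2
        | linear_combination -(η*s^2)*hs2
  have htr : (matLog U).trace = 0 := by
    rw [hlog, hM]
    simp [Matrix.trace_fin_three, Matrix.vecHead, Matrix.vecTail]
    ring
  -- the inverse of U
  set V : Matrix (Fin 3) (Fin 3) ℝ := !![(2+γ^2)/s, -γ/s, 0; -γ/s, 2/s, 0; 0, 0, 1] with hV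
  have hUinv : U⁻¹ = V := by
    apply Matrix.inv_eq_right_inv
    rw [hUU₀, hU₀, hV, Matrix.mul_fin_three, Matrix.one_fin_three]
    ext i j
    fin_cases i <;> fin_cases j <;> simp [Matrix.vecHead, Matrix.vecTail] <;> (try ring1) <;> (try field_simp) <;>
      first
        | ring1
        | (right; ring1)
        | linear_combination hs2
        | linear_combination -hs2
        | linear_combination γ*hs2
        | linear_combination -γ*hs2
        | linear_combination (γ-1)*hs2
        | linear_combination (γ+1)*hs2
        | linear_combination (γ^2+1)*hs2
        | linear_combination γ^2*hs2
        | linear_combination -γ^2*hs2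
        | linear_combination s^2*hs2
        | linear_combination -(s^2)*hs2
        | linear_combination (γ^2+4)*hs2
        | linear_combination η*hs2
        | linear_combination -η*hs2
        | linear_combination (η*γ)*hs2
        | linear_combination -(η*γ)*hs2
        | linear_combination (η*s)*hs2
        | linear_combination -(η*s)*hs2
        | linear_combination (η*s^2)*hs2
        | linear_combination -(η*s^2)*hs2
  -- determinant of the glide
  have hdetF : (glide γ).det = 1 := by
    simp [glide, Matrix.det_fin_three]
  -- glue everything
  rw [hdetF, inv_one, one_smul, htr, mul_zero, zero_smul, add_zero, hlog, hUinv]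
  have hFV : glide γ * V = !![2/s, γ/s, 0; -γ/s, 2/s, 0; 0, 0, 1] := by
    rw [glide, hV, Matrix.mul_fin_three]
    ext i j
    fin_cases i <;> fin_cases j <;> simp [Matrix.vecHead, Matrix.vecTail] <;> (try ring1) <;> (try field_simp) <;> ring
  have hFVM : (glide γ * V) * M = !![0, 1, 0; 1, 0, 0; 0, 0, 0] := by
    rw [hFV, hM, Matrix.mul_fin_three]
    ext i j
    fin_cases i <;> fin_cases j <;> simp [Matrix.vecHead, Matrix.vecTail] <;> (try ring1) <;> (try field_simp) <;>
      first
        | ring1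
        | (right; ring1)
        | linear_combination hs2
        | linear_combination -hs2
        | linear_combination γ*hs2
        | linear_combination -γ*hs2
        | linear_combination (γ-1)*hs2
        | linear_combination (γ+1)*hs2
        | linear_combination (γ^2+1)*hs2
        | linear_combination γ^2*hs2
        | linear_combination -γ^2*hs2
        | linear_combination s^2*hs2
        | linear_combination -(s^2)*hs2
        | linear_combination (γ^2+4)*hs2
        | linear_combination η*hs2
        | linear_combination -η*hs2
        | linear_combination (η*γ)*hs2
        | linear_combination -(η*γ)*hs2
        | linear_combination (η*s)*hs2
        | linear_combination -(η*s)*hs2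
        | linear_combination (η*s^2)*hs2
        | linear_combination -(η*s^2)*hs2
  rw [smul_smul, Matrix.mul_smul, Matrix.smul_mul, hFVM, hgt, Matrix.mul_fin_three]
  ext i j
  fin_cases i <;> fin_cases j <;> simp [Matrix.vecHead, Matrix.vecTail]
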